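/- Let R ⊆ ℂ[[t]] be a subring of finite codimension, δ = dim_ℂ(ℂ[[t]]/R), and let I be an ideal of R with dim_ℂ(R/I) = r. Then (t^{r+2δ}) ∩ R ⊆ I ⊆ (t^r) ∩ R, where (t^a) denotes the ideal t^a ℂ[[t]] of ℂ[[t]]. -/

import Mathlib

open PowerSeries

set_option synthInstance.maxHeartbeats 1000000
set_option maxHeartbeats 1000000

set_option synthInstance.maxHeartbeats 4000000
set_option maxHeartbeats 4000000
set_option linter.unusedVariables false

open Submodule
noncomputable section
attribute [local instance] Classical.propDecidable

abbrev PS : Type := PowerSeries ℂ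

def hasOrd (V : Submodule ℂ PS) (n : ℕ) : Prop :=
  ∃ f ∈ V, coeff n f ≠ 0 ∧ ∀ m < n, coeff m f = 0

lemma coeff_mul_lowzero (f g : PS) (c : ℕ) (hg : ∀ m < c, coeff m g = 0) :
    ∀ m < c, coeff m (f * g) = 0 := by
  intro m hm
  rw [coeff_mul]
  refine Finset.sum_eq_zero ?_
  rintro ⟨i, j⟩ hij
  rw [Finset.HasAntidiagonal.mem_antidiagonal] at hij
  have hj : j < c := by omega
  simp [hg j hj]

lemma ordEq_mul (f g : PS) (a b : ℕ)
    (hf1 : coeff a f ≠ 0) (hf2 : ∀ m < a, coeff m f = 0)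
    (hg1 : coeff b g ≠ 0) (hg2 : ∀ m < b, coeff m g = 0) :
    coeff (a + b) (f * g) ≠ 0 ∧ ∀ m < a + b, coeff m (f * g) = 0 := by
  constructor
  · rw [coeff_mul]
    rw [Finset.sum_eq_single ((a, b) : ℕ × ℕ)]
    · exact mul_ne_zero hf1 hg1
    · rintro ⟨i, j⟩ hij hne
      rw [Finset.HasAntidiagonal.mem_antidiagonal] at hij
      rcases lt_or_ge i a with h | h
      · simp [hf2 i h]
      · have : j < b := by
          rcases eq_or_lt_of_le h with h' | h'
          · exfalso; apply hne; simp at hij ⊢; omega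
          · omega
        simp [hg2 j this]
    · intro hmem
      exfalso; exact hmem (by rw [Finset.HasAntidiagonal.mem_antidiagonal])
  · intro m hm
    rw [coeff_mul]
    refine Finset.sum_eq_zero ?_
    rintro ⟨i, j⟩ hij
    rw [Finset.HasAntidiagonal.mem_antidiagonal] at hij
    rcases lt_or_ge i a with h | h
    · simp [hf2 i h]
    · have : j < b := by omega
      simp [hg2 j this]

lemma li_master (V : Submodule ℂ PS) {ι : Type} (v : ι → PS) (d : ι → ℕ)
    (hinj : Function.Injective d)
    (h1 : ∀ i, coeff (d i) (v i) ≠ 0)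
    (h2 : ∀ i, ∀ m < d i, coeff m (v i) = 0)
    (hgap : ∀ i, ¬ hasOrd V (d i)) :
    LinearIndependent ℂ (fun i => V.mkQ (v i)) := by
  classical
  rw [linearIndependent_iff']
  intro s g hsum i hi
  by_contra hgi
  set T := s.filter (fun j => g j ≠ 0) with hT
  have hTne : T.Nonempty := ⟨i, by simp [hT, hi, hgi]⟩
  have hTim : (T.image d).Nonempty := hTne.image d
  obtain ⟨j0, hj0T, hdj0⟩ := Finset.mem_image.mp ((T.image d).min'_mem hTim)
  have hmin : ∀ j ∈ T, d j0 ≤ d j := by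
    intro j hj
    rw [hdj0]
    exact Finset.min'_le _ _ (Finset.mem_image_of_mem d hj)
  have hj0s : j0 ∈ s := (Finset.mem_filter.mp hj0T).1
  have hgj0 : g j0 ≠ 0 := (Finset.mem_filter.mp hj0T).2
  have hmem : (∑ j ∈ s, g j • v j) ∈ V := by
    have h0 : V.mkQ (∑ j ∈ s, g j • v j) = 0 := by
      rw [map_sum]
      simpa [map_smul] using hsum
    rwa [Submodule.mkQ_apply, Submodule.Quotient.mk_eq_zero] at h0
  refine hgap j0 ⟨∑ j ∈ s, g j • v j, hmem, ?_, ?_⟩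
  · rw [map_sum]
    rw [Finset.sum_eq_single j0]
    · simpa [smul_eq_mul] using mul_ne_zero hgj0 (h1 j0)
    · intro j hj hne
      by_cases hgj : g j = 0
      · simp [hgj]
      · have hjT : j ∈ T := Finset.mem_filter.mpr ⟨hj, hgj⟩
        have := hmin j hjT
        have hlt : d j0 < d j := lt_of_le_of_ne this (fun h => hne (hinj h.symm))
        simp [h2 j _ hlt]
    · intro h; exact absurd hj0s h
  · intro m hm
    rw [map_sum]
    refine Finset.sum_eq_zero ?_
    intro j hj
    by_cases hgj : g j = 0
    · simp [hgj]
    · have hjT : j ∈ T := Finset.mem_filter.mpr ⟨hj, hgj⟩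
      have : m < d j := lt_of_lt_of_le hm (hmin j hjT)
      simp [h2 j m this]

def ISub (R : Subalgebra ℂ PS) (I : Ideal R) : Submodule ℂ PS :=
  Submodule.map R.val.toLinearMap (I.restrictScalars ℂ)


-- division lemma
lemma div_lemma (q h : PS) (a c : ℕ)
    (hq1 : coeff a q ≠ 0) (hq2 : ∀ m < a, coeff m q = 0)
    (hh : ∀ m < a + c, coeff m h = 0) :
    ∃ w : PS, (∀ m < c, coeff m w = 0) ∧ h = q * w := by
  obtain ⟨q₁, hq₁⟩ : (X : PS) ^ a ∣ q := X_pow_dvd_iff.mpr hq2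
  obtain ⟨h₂, hh₂⟩ : (X : PS) ^ (a + c) ∣ h := X_pow_dvd_iff.mpr hh
  have hq₁0 : constantCoeff q₁ ≠ 0 := by
    intro h0
    apply hq1
    rw [hq₁]
    have := coeff_X_pow_mul q₁ a 0
    simpa [h0] using this
  have hu : IsUnit q₁ := by
    rw [PowerSeries.isUnit_iff_constantCoeff]
    exact isUnit_iff_ne_zero.mpr hq₁0
  obtain ⟨u, hu⟩ := hu
  refine ⟨(↑u⁻¹ : PS) * ((X : PS) ^ c * h₂), ?_, ?_⟩
  · apply coeff_mul_lowzero
    intro m hm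
    exact X_pow_dvd_iff.mp ⟨h₂, rfl⟩ m hm
  · rw [hh₂, hq₁]
    rw [← hu]
    calc (X:PS) ^ (a+c) * h₂ = ((X:PS)^a * (X:PS)^c) * h₂ := by rw [pow_add]
    _ = (X:PS)^a * ((↑u * ↑u⁻¹ : PS) * ((X:PS)^c * h₂)) := by
        rw [← Units.val_mul, mul_inv_cancel, Units.val_one]; ring
    _ = (X:PS)^a * ↑u * (↑u⁻¹ * ((X:PS)^c * h₂)) := by ring

lemma gap_card_le (V : Submodule ℂ PS) [FiniteDimensional ℂ (PS ⧸ V)] (G : Finset ℕ)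
    (hG : ∀ n ∈ G, ¬ hasOrd V n) : G.card ≤ Module.finrank ℂ (PS ⧸ V) := by
  have li := li_master V (fun n : ↥G => (X : PS) ^ (n : ℕ)) (fun n => (n : ℕ))
    Subtype.coe_injective
    (by intro i; simp [coeff_X_pow])
    (by intro i m hm; simp [coeff_X_pow, Nat.ne_of_lt hm])
    (fun i => hG i i.2)
  simpa [Fintype.card_coe] using li.fintype_card_le_finrank

lemma span_up (V : Submodule ℂ PS) (K : ℕ)
    (hbase : ∀ h : PS, (∀ m < K, coeff m h = 0) → h ∈ V) :
    ∀ d : ℕ, ∀ h : PS, (∀ m < K - d, coeff m h = 0) →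
      h ∈ V ⊔ Submodule.span ℂ ((fun n => (X : PS) ^ n) '' {n | n < K ∧ ¬ hasOrd V n}) := by
  intro d
  induction d with
  | zero =>
    intro h hh
    exact Submodule.mem_sup_left (hbase h (fun m hm => hh m (by simpa using hm)))
  | succ d ih =>
    intro h hh
    by_cases hdK : K ≤ d
    · exact ih h (fun m hm => hh m (by omega))
    · set n := K - (d + 1) with hn
      have hnK : n < K := by omega
      by_cases ho : hasOrd V n
      · obtain ⟨f, hfV, hf1, hf2⟩ := ho
        have hmem : h - (coeff n h / coeff n f) • f ∈
            V ⊔ Submodule.span ℂ ((fun n => (X : PS) ^ n) '' {n | n < K ∧ ¬ hasOrd V n}) := by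
          refine ih _ ?_
          intro m hm
          rcases lt_or_eq_of_le (show m ≤ n by omega) with h' | h'
          · simp [hh m (by omega), hf2 m h']
          · subst h'
            simp only [map_sub, map_smul, smul_eq_mul]
            field_simp
            ring
        have : h = (h - (coeff n h / coeff n f) • f) + (coeff n h / coeff n f) • f := by
          ring
        rw [this]
        exact Submodule.add_mem _ hmem
          (Submodule.mem_sup_left (Submodule.smul_mem _ _ hfV))
      · have hXmem : (X : PS) ^ n ∈
            Submodule.span ℂ ((fun n => (X : PS) ^ n) '' {n | n < K ∧ ¬ hasOrd V n}) :=
          Submodule.subset_span ⟨n, ⟨hnK, ho⟩, rfl⟩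
        have hmem : h - (coeff n h) • (X : PS) ^ n ∈
            V ⊔ Submodule.span ℂ ((fun n => (X : PS) ^ n) '' {n | n < K ∧ ¬ hasOrd V n}) := by
          refine ih _ ?_
          intro m hm
          rcases lt_or_eq_of_le (show m ≤ n by omega) with h' | h'
          · simp [hh m (by omega), coeff_X_pow, Nat.ne_of_lt h']
          · subst h'
            simp [coeff_X_pow]
        have : h = (h - (coeff n h) • (X : PS) ^ n) + (coeff n h) • (X : PS) ^ n := by
          ring
        rw [this]
        exact Submodule.add_mem _ hmem
          (Submodule.mem_sup_right (Submodule.smul_mem _ _ hXmem))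

lemma quotient_fd (V : Submodule ℂ PS) (K : ℕ)
    (hbase : ∀ h : PS, (∀ m < K, coeff m h = 0) → h ∈ V) :
    FiniteDimensional ℂ (PS ⧸ V) ∧
      Module.finrank ℂ (PS ⧸ V) ≤
        ((Finset.range K).filter (fun n => ¬ hasOrd V n)).card := by
  classical
  set G := (Finset.range K).filter (fun n => ¬ hasOrd V n) with hG
  set T : Finset (PS ⧸ V) := G.image (fun n => V.mkQ ((X : PS) ^ n)) with hTdef
  have hsetreform : (fun n => (X : PS) ^ n) '' {n | n < K ∧ ¬ hasOrd V n} =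
      (fun n => (X : PS) ^ n) '' ↑G := by
    congr 1
    ext n
    simp [hG]
  have hspan : Submodule.span ℂ (↑T : Set (PS ⧸ V)) = ⊤ := by
    rw [eq_top_iff]
    rintro q -
    obtain ⟨h, rfl⟩ := Submodule.mkQ_surjective V q
    have := span_up V K hbase K h (by intro m hm; omega)
    have himg : V.mkQ h ∈ Submodule.map V.mkQ
        (V ⊔ Submodule.span ℂ ((fun n => (X : PS) ^ n) '' {n | n < K ∧ ¬ hasOrd V n})) :=
      Submodule.mem_map_of_mem this
    rw [Submodule.map_sup, Submodule.map_span] at himg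
    have hmapV : Submodule.map V.mkQ V = ⊥ := by
      rw [eq_bot_iff]
      rintro x ⟨y, hy, rfl⟩
      have hy' : y ∈ V := hy
      have : V.mkQ y = 0 := by rwa [Submodule.mkQ_apply, Submodule.Quotient.mk_eq_zero]
      simp [this]
    rw [hmapV, bot_sup_eq, hsetreform, ← Set.image_comp] at himg
    have : (⇑V.mkQ ∘ fun n => (X : PS) ^ n) '' ↑G = ↑T := by
      rw [hTdef, Finset.coe_image]
      rfl
    rwa [this] at himg
  constructor
  · have : (⊤ : Submodule ℂ (PS ⧸ V)).FG := ⟨T, hspan⟩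
    exact Module.finite_def.mpr this
  · calc Module.finrank ℂ (PS ⧸ V) = Module.finrank ℂ (⊤ : Submodule ℂ (PS ⧸ V)) :=
          (finrank_top ℂ _).symm
    _ = Module.finrank ℂ (Submodule.span ℂ (↑T : Set (PS ⧸ V))) := by rw [hspan]
    _ ≤ T.card := by
          have := finrank_span_finset_le_card (R := ℂ) T
          simpa [Set.finrank] using this
    _ ≤ G.card := Finset.card_image_le

lemma desc (V : Submodule ℂ PS) (K N : ℕ) (hNK : N ≤ K)
    (hbase : ∀ h : PS, (∀ m < K, coeff m h = 0) → h ∈ V)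
    (hfill : ∀ n, N ≤ n → n < K → hasOrd V n) :
    ∀ h : PS, (∀ m < N, coeff m h = 0) → h ∈ V := by
  have aux : ∀ d : ℕ, N ≤ K - d → ∀ h : PS, (∀ m < K - d, coeff m h = 0) → h ∈ V := by
    intro d
    induction d with
    | zero => intro _ h hh; exact hbase h (fun m hm => hh m (by simpa using hm))
    | succ d ih =>
      intro hNd h hh
      by_cases hdK : K ≤ d
      · exact ih (by omega) h (fun m hm => hh m (by omega))
      · set n := K - (d + 1) with hn
        have hnK : n < K := by omega
        obtain ⟨f, hfV, hf1, hf2⟩ := hfill n (by omega) hnK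
        have hmem : h - (coeff n h / coeff n f) • f ∈ V := by
          refine ih (by omega) _ ?_
          intro m hm
          rcases lt_or_eq_of_le (show m ≤ n by omega) with h' | h'
          · simp [hh m (by omega), hf2 m h']
          · subst h'
            simp only [map_sub, map_smul, smul_eq_mul]
            field_simp
            ring
        have heq : h = (h - (coeff n h / coeff n f) • f) + (coeff n h / coeff n f) • f := by
          ring
        rw [heq]
        exact Submodule.add_mem _ hmem (Submodule.smul_mem _ _ hfV)
  intro h hh
  have := aux (K - N) (by omega) h (by intro m hm; exact hh m (by omega))
  exact this

lemma many_orders (V : Submodule ℂ PS) [FiniteDimensional ℂ (PS ⧸ V)] (D : ℕ) :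
    ∃ good : Finset ℕ, D + 1 ≤ good.card ∧ ∀ n ∈ good, hasOrd V n := by
  set δV := Module.finrank ℂ (PS ⧸ V)
  set good := (Finset.range (D + δV + 1)).filter (fun n => hasOrd V n) with hgood
  set bad := (Finset.range (D + δV + 1)).filter (fun n => ¬ hasOrd V n) with hbad
  have hbadcard : bad.card ≤ δV :=
    gap_card_le V bad (fun n hn => (Finset.mem_filter.mp hn).2)
  have hsum : good.card + bad.card = D + δV + 1 := by
    rw [hgood, hbad]
    simpa using Finset.card_filter_add_card_filter_not
      (s := Finset.range (D + δV + 1)) (p := fun n => hasOrd V n)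
  exact ⟨good, by omega, fun n hn => (Finset.mem_filter.mp hn).2⟩

lemma li_of_orders (V : Submodule ℂ PS) {good : Finset ℕ} (e : ↥good → PS)
    (he1 : ∀ n : ↥good, e n ∈ V)
    (he2 : ∀ n : ↥good, coeff (n : ℕ) (e n) ≠ 0)
    (he3 : ∀ n : ↥good, ∀ m < (n : ℕ), coeff m (e n) = 0) :
    LinearIndependent ℂ e := by
  have lie : LinearIndependent ℂ (fun n : ↥good => (⊥ : Submodule ℂ PS).mkQ (e n)) :=
    li_master ⊥ e (fun n => (n : ℕ)) Subtype.coe_injective he2 he3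
      (by rintro i ⟨f, hf, hc, -⟩
          rw [Submodule.mem_bot] at hf
          exact hc (by simp [hf]))
  exact LinearIndependent.of_comp (⊥ : Submodule ℂ PS).mkQ lie

lemma exists_nonzero_mul_mem (V : Submodule ℂ PS) [FiniteDimensional ℂ (PS ⧸ V)] (g : PS) :
    ∃ f ∈ V, f ≠ 0 ∧ g * f ∈ V := by
  set δV := Module.finrank ℂ (PS ⧸ V)
  obtain ⟨good, hcard, hgood⟩ := many_orders V δV
  have h' : ∀ n : ↥good, ∃ f, f ∈ V ∧ coeff (n : ℕ) f ≠ 0 ∧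
      ∀ m < (n : ℕ), coeff m f = 0 := by
    intro n
    obtain ⟨f, hf, h1, h2⟩ := hgood n n.2
    exact ⟨f, hf, h1, h2⟩
  choose e he1 he2 he3 using h'
  have hnli : ¬ LinearIndependent ℂ (fun n : ↥good => V.mkQ (g * e n)) := by
    intro hli
    have := hli.fintype_card_le_finrank
    rw [Fintype.card_coe] at this
    omega
  obtain ⟨γ, hγ, i0, hγ0⟩ := Fintype.not_linearIndependent_iff.mp hnli
  refine ⟨∑ n : ↥good, γ n • e n,
    Submodule.sum_mem _ (fun n _ => Submodule.smul_mem _ _ (he1 n)), ?_, ?_⟩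
  · intro h0
    have lie2 : LinearIndependent ℂ e := li_of_orders V e he1 he2 he3
    exact hγ0 (Fintype.linearIndependent_iff.mp lie2 γ h0 i0)
  · have hq : V.mkQ (g * (∑ n : ↥good, γ n • e n)) = 0 := by
      have : g * (∑ n : ↥good, γ n • e n) = ∑ n : ↥good, γ n • (g * e n) := by
        rw [Finset.mul_sum]
        exact Finset.sum_congr rfl (fun n _ => (mul_smul_comm _ _ _))
      rw [this, map_sum]
      simpa [map_smul] using hγ
    rwa [Submodule.mkQ_apply, Submodule.Quotient.mk_eq_zero] at hq

lemma R_not_fd (R : Subalgebra ℂ PS)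
    [FiniteDimensional ℂ (PS ⧸ (Subalgebra.toSubmodule R))] :
    ¬ FiniteDimensional ℂ ↥R := by
  intro hFD
  set V := Subalgebra.toSubmodule R with hV
  obtain ⟨good, hcard, hgood⟩ := many_orders V (Module.finrank ℂ ↥R)
  have h' : ∀ n : ↥good, ∃ f, f ∈ V ∧ coeff (n : ℕ) f ≠ 0 ∧
      ∀ m < (n : ℕ), coeff m f = 0 := by
    intro n
    obtain ⟨f, hf, h1, h2⟩ := hgood n n.2
    exact ⟨f, hf, h1, h2⟩
  choose e he1 he2 he3 using h'
  have lie2 : LinearIndependent ℂ e := li_of_orders V e he1 he2 he3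
  set ε : ↥good → ↥R := fun n => ⟨e n, (Subalgebra.mem_toSubmodule R).mp (he1 n)⟩ with hε
  have liε : LinearIndependent ℂ ε := by
    refine LinearIndependent.of_comp R.val.toLinearMap ?_
    have : (⇑R.val.toLinearMap ∘ ε) = e := by funext n; rfl
    rw [this]
    exact lie2
  have := liε.fintype_card_le_finrank
  rw [Fintype.card_coe] at this
  omega

lemma conductor_exists (R : Subalgebra ℂ PS)
    [FiniteDimensional ℂ (PS ⧸ Subalgebra.toSubmodule R)] :
    ∃ c : ℕ, ∀ h : PS, (∀ m < c, coeff m h = 0) → h ∈ Subalgebra.toSubmodule R := by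
  set V := Subalgebra.toSubmodule R with hV
  obtain ⟨s, hs⟩ := Module.finite_def.mp
    (inferInstance : Module.Finite ℂ (PS ⧸ V))
  set L : (PS ⧸ V) → PS := Function.surjInv (Submodule.mkQ_surjective V) with hLdef
  have hL : ∀ q : PS ⧸ V, V.mkQ (L q) = q :=
    fun q => Function.surjInv_eq (Submodule.mkQ_surjective V) q
  have hFex : ∀ x : ↥s, ∃ f, f ∈ V ∧ f ≠ 0 ∧ (L ↑x) * f ∈ V := by
    intro x
    obtain ⟨f, h1, h2, h3⟩ := exists_nonzero_mul_mem V (L ↑x)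
    exact ⟨f, h1, h2, h3⟩
  choose F hF1 hF2 hF3 using hFex
  set q0 : PS := ∏ x : ↥s, F x with hq0def
  have hq0R : q0 ∈ R := prod_mem (fun x _ => (Subalgebra.mem_toSubmodule R).mp (hF1 x))
  have hq0ne : q0 ≠ 0 := Finset.prod_ne_zero_iff.mpr (fun x _ => hF2 x)
  have hq0L : ∀ x : ↥s, q0 * L ↑x ∈ V := by
    intro x
    have hsplit : q0 = F x * ∏ y ∈ Finset.univ.erase x, F y :=
      (Finset.mul_prod_erase Finset.univ F (Finset.mem_univ x)).symm
    have hrw : q0 * L ↑x = (∏ y ∈ Finset.univ.erase x, F y) * ((L ↑x) * F x) := by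
      rw [hsplit]; ring
    rw [hrw]
    exact (Subalgebra.mem_toSubmodule R).mpr
      (mul_mem (prod_mem (fun y _ => (Subalgebra.mem_toSubmodule R).mp (hF1 y)))
        ((Subalgebra.mem_toSubmodule R).mp (hF3 x)))
  have hq0P : ∀ h : PS, q0 * h ∈ V := by
    intro h
    have hmemtop : V.mkQ h ∈ span ℂ (↑s : Set (PS ⧸ V)) := by rw [hs]; trivial
    obtain ⟨cfun, hcf⟩ := mem_span_finset.mp hmemtop
    have hdiff : h - ∑ x ∈ s, cfun x • L x ∈ V := by
      have h0 : V.mkQ (h - ∑ x ∈ s, cfun x • L x) = 0 := by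
        rw [map_sub, map_sum]
        have : ∑ x ∈ s, V.mkQ (cfun x • L x) = ∑ x ∈ s, cfun x • x :=
          Finset.sum_congr rfl (fun x _ => by rw [map_smul, hL])
        rw [this, hcf.2]
        simp
      rwa [Submodule.mkQ_apply, Submodule.Quotient.mk_eq_zero] at h0
    have hrw : q0 * h = q0 * (h - ∑ x ∈ s, cfun x • L x) + ∑ x ∈ s, cfun x • (q0 * L x) := by
      have h1 : ∑ x ∈ s, cfun x • (q0 * L x) = q0 * ∑ x ∈ s, cfun x • L x := by
        rw [Finset.mul_sum]
        exact Finset.sum_congr rfl (fun x _ => (mul_smul_comm _ _ _).symm)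
      rw [h1]; ring
    rw [hrw]
    refine Submodule.add_mem _ ?_ ?_
    · exact (Subalgebra.mem_toSubmodule R).mpr
        (mul_mem hq0R ((Subalgebra.mem_toSubmodule R).mp hdiff))
    · exact Submodule.sum_mem _ (fun x hx => Submodule.smul_mem _ _ (hq0L ⟨x, hx⟩))
  have hex : ∃ n, coeff n q0 ≠ 0 := by
    by_contra hall
    push_neg at hall
    exact hq0ne (PowerSeries.ext (fun n => by simpa using hall n))
  refine ⟨Nat.find hex, ?_⟩
  intro h hh
  obtain ⟨w, -, rfl⟩ := div_lemma q0 h (Nat.find hex) 0 (Nat.find_spec hex)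
    (fun m hm => by simpa using Nat.find_min hex hm)
    (fun m hm => hh m (by simpa using hm))
  exact hq0P w

lemma finrank_quot_IS (R : Subalgebra ℂ PS) (I : Ideal R)
    [FiniteDimensional ℂ (PS ⧸ Subalgebra.toSubmodule R)]
    [FiniteDimensional ℂ (R ⧸ I)]
    [hFDI : FiniteDimensional ℂ (PS ⧸ ISub R I)] :
    Module.finrank ℂ (PS ⧸ ISub R I) =
      Module.finrank ℂ (PS ⧸ Subalgebra.toSubmodule R) + Module.finrank ℂ (R ⧸ I) := by
  set RS := Subalgebra.toSubmodule R with hRS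
  set IS := ISub R I with hIS
  rw [ISub] at hIS
  have hIR : IS ≤ RS := by
    rintro x ⟨y, -, rfl⟩
    exact (Subalgebra.mem_toSubmodule R).mpr y.2
  set φ : ↥R →ₗ[ℂ] (PS ⧸ IS) := IS.mkQ.comp R.val.toLinearMap with hφ
  have hker : LinearMap.ker φ = I.restrictScalars ℂ := by
    ext x
    simp only [LinearMap.mem_ker, hφ, LinearMap.comp_apply, Submodule.mkQ_apply,
      Submodule.Quotient.mk_eq_zero, Submodule.restrictScalars_mem]
    constructor
    · rintro ⟨y, hy, hyx⟩
      have : y = x := Subtype.coe_injective hyx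
      rw [← this]
      exact hy
    · intro hx
      exact ⟨x, hx, rfl⟩
  have hrange : LinearMap.range φ = Submodule.map IS.mkQ RS := by
    ext q
    simp only [LinearMap.mem_range, hφ, LinearMap.comp_apply, Submodule.mem_map]
    constructor
    · rintro ⟨x, rfl⟩
      exact ⟨↑x, (Subalgebra.mem_toSubmodule R).mpr x.2, rfl⟩
    · rintro ⟨y, hy, rfl⟩
      exact ⟨⟨y, (Subalgebra.mem_toSubmodule R).mp hy⟩, rfl⟩
  have e1 : (↥R ⧸ I.restrictScalars ℂ) ≃ₗ[ℂ] ↥(LinearMap.range φ) :=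
    (Submodule.quotEquivOfEq _ _ hker.symm).trans φ.quotKerEquivRange
  have e0 : (↥R ⧸ I.restrictScalars ℂ) ≃ₗ[ℂ] (R ⧸ I) :=
    Submodule.Quotient.restrictScalarsEquiv ℂ I
  have eqRange : ↥(LinearMap.range φ) ≃ₗ[ℂ] (R ⧸ I) := e1.symm.trans e0
  have e2 := Submodule.quotientQuotientEquivQuotient IS RS hIR
  have hadd := Submodule.finrank_quotient_add_finrank (Submodule.map IS.mkQ RS)
  have h1 : Module.finrank ℂ ((PS ⧸ IS) ⧸ (Submodule.map IS.mkQ RS)) =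
      Module.finrank ℂ (PS ⧸ RS) := LinearEquiv.finrank_eq e2
  have h2 : Module.finrank ℂ ↥(Submodule.map IS.mkQ RS) = Module.finrank ℂ (R ⧸ I) := by
    rw [← hrange]
    exact LinearEquiv.finrank_eq eqRange
  omega

end

/-- For `R ⊆ ℂ[[t]]` of finite codimension `δ` and an ideal `I` of `R`
with `dim_ℂ(R/I) = r`, one has `(t^{r+2δ}) ∩ R ⊆ I ⊆ (t^r) ∩ R`. -/
theorem ideal_sandwich
    (R : Subalgebra ℂ (PowerSeries ℂ))
    (δ : ℕ)
    (hfin : FiniteDimensional ℂ (PowerSeries ℂ ⧸ Subalgebra.toSubmodule R))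
    (hδ : Module.finrank ℂ (PowerSeries ℂ ⧸ Subalgebra.toSubmodule R) = δ)
    (I : Ideal R) (r : ℕ)
    (hrfin : FiniteDimensional ℂ (R ⧸ I))
    (hr : Module.finrank ℂ (R ⧸ I) = r) :
    (∀ f : R, (X : PowerSeries ℂ) ^ (r + 2 * δ) ∣ (f : PowerSeries ℂ) → f ∈ I) ∧
    (∀ f : R, f ∈ I → (X : PowerSeries ℂ) ^ r ∣ (f : PowerSeries ℂ)) := by
  classical
  haveI := hfin
  haveI := hrfin
  have hmemIS : ∀ f : PS, f ∈ ISub R I ↔ ∃ g : ↥R, g ∈ I ∧ (g : PS) = f := by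
    intro f
    rw [ISub, Submodule.mem_map]
    constructor
    · rintro ⟨y, hy, rfl⟩
      exact ⟨y, hy, rfl⟩
    · rintro ⟨g, hg, rfl⟩
      exact ⟨g, hg, rfl⟩
  -- conductor
  obtain ⟨c0, hcond⟩ := conductor_exists R
  -- I is nonzero
  have hf0ex : ∃ f0 : ↥R, f0 ∈ I ∧ (f0 : PS) ≠ 0 := by
    by_contra hall
    push_neg at hall
    have hIbot : I.restrictScalars ℂ = ⊥ := by
      rw [eq_bot_iff]
      intro x hx
      have hx0 : (x : PS) = 0 := hall x hx
      have : x = 0 := Subtype.coe_injective (by simpa using hx0)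
      simp [this]
    have eR : (↥R ⧸ I.restrictScalars ℂ) ≃ₗ[ℂ] ↥R := Submodule.quotEquivOfEqBot _ hIbot
    have e0 : (↥R ⧸ I.restrictScalars ℂ) ≃ₗ[ℂ] (R ⧸ I) :=
      Submodule.Quotient.restrictScalarsEquiv ℂ I
    have : FiniteDimensional ℂ ↥R := (e0.symm.trans eR).finiteDimensional
    exact R_not_fd R this
  obtain ⟨f0, hf0I, hf0ne⟩ := hf0ex
  have hexu : ∃ n, coeff n (f0 : PS) ≠ 0 := by
    by_contra hallu
    push_neg at hallu
    exact hf0ne (PowerSeries.ext (fun n => by simpa using hallu n))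
  set u0 := Nat.find hexu with hu0
  have hu01 : coeff u0 (f0 : PS) ≠ 0 := Nat.find_spec hexu
  have hu02 : ∀ m < u0, coeff m (f0 : PS) = 0 :=
    fun m hm => by simpa using Nat.find_min hexu hm
  set K := max (u0 + c0) (r + 2 * δ) with hKdef
  have hNK : r + 2 * δ ≤ K := le_max_right _ _
  have huK : u0 + c0 ≤ K := le_max_left _ _
  have hbaseI : ∀ h : PS, (∀ m < K, coeff m h = 0) → h ∈ ISub R I := by
    intro h hh
    obtain ⟨w, hw, rfl⟩ := div_lemma (↑f0) h u0 c0 hu01 hu02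
      (fun m hm => hh m (by omega))
    have hwR : w ∈ R := (Subalgebra.mem_toSubmodule R).mp (hcond w hw)
    exact (hmemIS _).mpr ⟨f0 * ⟨w, hwR⟩, I.mul_mem_right _ hf0I, rfl⟩
  obtain ⟨hFDI, hle1⟩ := quotient_fd (ISub R I) K hbaseI
  haveI := hFDI
  set GI := (Finset.range K).filter (fun n => ¬ hasOrd (ISub R I) n) with hGIdef
  have hle2 : GI.card ≤ Module.finrank ℂ (PS ⧸ ISub R I) :=
    gap_card_le (ISub R I) GI (fun n hn => (Finset.mem_filter.mp hn).2)
  have hfr : Module.finrank ℂ (PS ⧸ ISub R I) = δ + r := by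
    rw [finrank_quot_IS R I, hδ, hr]
  have hcard : GI.card = δ + r := le_antisymm (hfr ▸ hle2) (hfr ▸ hle1)
  -- product of orders
  have hprodIS : ∀ a b : ℕ, hasOrd (ISub R I) a → hasOrd (Subalgebra.toSubmodule R) b →
      hasOrd (ISub R I) (a + b) := by
    rintro a b ⟨f, hfIS, hf1, hf2⟩ ⟨g, hgRS, hg1, hg2⟩
    obtain ⟨fi, hfiI, rfl⟩ := (hmemIS f).mp hfIS
    have hgR : g ∈ R := (Subalgebra.mem_toSubmodule R).mp hgRS
    obtain ⟨hm1, hm2⟩ := ordEq_mul (↑fi) g a b hf1 hf2 hg1 hg2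
    exact ⟨(↑fi : PS) * g,
      (hmemIS _).mpr ⟨fi * ⟨g, hgR⟩, I.mul_mem_right _ hfiI, rfl⟩, hm1, hm2⟩
  constructor
  · -- Goal 1
    have hfill : ∀ n, r + 2 * δ ≤ n → n < K → hasOrd (ISub R I) n := by
      intro n hNn hnK
      by_contra hno
      have hnGI : n ∈ GI := Finset.mem_filter.mpr ⟨Finset.mem_range.mpr hnK, hno⟩
      set B := (Finset.range (n + 1)).filter (fun b => hasOrd (Subalgebra.toSubmodule R) b)
        with hBdef
      set Bc := (Finset.range (n + 1)).filter (fun b => ¬ hasOrd (Subalgebra.toSubmodule R) b)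
        with hBcdef
      have hBc : Bc.card ≤ δ := by
        rw [← hδ]
        exact gap_card_le _ Bc (fun b hb => (Finset.mem_filter.mp hb).2)
      have hBBc : B.card + Bc.card = n + 1 := by
        rw [hBdef, hBcdef]
        simpa using Finset.card_filter_add_card_filter_not
          (s := Finset.range (n + 1)) (p := fun b => hasOrd (Subalgebra.toSubmodule R) b)
      have hmapsub : B.image (fun b => n - b) ⊆ GI := by
        intro m hm
        obtain ⟨b, hb, rfl⟩ := Finset.mem_image.mp hm
        obtain ⟨hbr, hbo⟩ := Finset.mem_filter.mp hb
        have hbn : b ≤ n := by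
          have := Finset.mem_range.mp hbr; omega
        refine Finset.mem_filter.mpr ⟨Finset.mem_range.mpr (by omega), ?_⟩
        intro hcontra
        have := hprodIS (n - b) b hcontra hbo
        rw [show n - b + b = n by omega] at this
        exact hno this
      have hinj : B.card = (B.image (fun b => n - b)).card := by
        rw [Finset.card_image_of_injOn]
        intro b hb b' hb' hbb
        have h1 : b ≤ n := by have := Finset.mem_range.mp (Finset.mem_filter.mp hb).1; omega
        have h2 : b' ≤ n := by have := Finset.mem_range.mp (Finset.mem_filter.mp hb').1; omega
        have hbb' : n - b = n - b' := hbb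
        omega
      have hBle : B.card ≤ GI.card := hinj ▸ Finset.card_le_card hmapsub
      omega
    have hdesc := desc (ISub R I) K (r + 2 * δ) hNK hbaseI hfill
    intro f hdvd
    have hcoe : (↑f : PS) ∈ ISub R I :=
      hdesc _ (fun m hm => X_pow_dvd_iff.mp hdvd m hm)
    obtain ⟨g, hgI, hg⟩ := (hmemIS _).mp hcoe
    have : g = f := Subtype.coe_injective hg
    rwa [this] at hgI
  · -- Goal 2
    intro f hfI
    by_cases hfz : (f : PS) = 0
    · rw [hfz]; exact dvd_zero _
    · have hexv : ∃ n, coeff n (f : PS) ≠ 0 := by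
        by_contra hallv
        push_neg at hallv
        exact hfz (PowerSeries.ext (fun n => by simpa using hallv n))
      set v := Nat.find hexv with hvdef
      have hv1 : coeff v (f : PS) ≠ 0 := Nat.find_spec hexv
      have hv2 : ∀ m < v, coeff m (f : PS) = 0 :=
        fun m hm => by simpa using Nat.find_min hexv hm
      have hOrdv : hasOrd (ISub R I) v := ⟨↑f, (hmemIS _).mpr ⟨f, hfI, rfl⟩, hv1, hv2⟩
      have hrv : r ≤ v := by
        by_cases hvK : K ≤ v
        · omega
        · push_neg at hvK
          have hsplit : (GI.filter (fun n => n < v)).card +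
              (GI.filter (fun n => ¬ n < v)).card = GI.card :=
            Finset.card_filter_add_card_filter_not (s := GI) (p := fun n => n < v)
          have hGlo : (GI.filter (fun n => n < v)).card ≤ v := by
            have hsub : GI.filter (fun n => n < v) ⊆ Finset.range v := by
              intro n hn
              exact Finset.mem_range.mpr (Finset.mem_filter.mp hn).2
            simpa using Finset.card_le_card hsub
          have hGhi : (GI.filter (fun n => ¬ n < v)).card ≤ δ := by
            have hprop : ∀ n ∈ GI.filter (fun n => ¬ n < v),
                ¬ hasOrd (Subalgebra.toSubmodule R) (n - v) ∧ v < n := by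
              intro n hn
              obtain ⟨hnGI, hnv⟩ := Finset.mem_filter.mp hn
              obtain ⟨hnr, hno⟩ := Finset.mem_filter.mp hnGI
              have hvn : v ≤ n := by omega
              have hne : n ≠ v := by
                intro h; exact hno (h ▸ hOrdv)
              refine ⟨?_, by omega⟩
              intro hcontra
              have := hprodIS v (n - v) hOrdv hcontra
              rw [show v + (n - v) = n by omega] at this
              exact hno this
            have hinj2 : (GI.filter (fun n => ¬ n < v)).card =
                ((GI.filter (fun n => ¬ n < v)).image (fun n => n - v)).card := by
              rw [Finset.card_image_of_injOn]
              intro b hb b' hb' hbb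
              have h1 := (hprop b hb).2
              have h2 := (hprop b' hb').2
              have hbb' : b - v = b' - v := hbb
              omega
            rw [hinj2, ← hδ]
            refine gap_card_le _ _ ?_
            intro m hm
            obtain ⟨n, hn, rfl⟩ := Finset.mem_image.mp hm
            exact (hprop n hn).1
          omega
      exact X_pow_dvd_iff.mpr (fun m hm => hv2 m (by omega))
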